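/- Let G₁ and G₂ be vertex-disjoint matching-covered graphs with edges e₁ = x₁y₁ ∈ E(G₁), e₂ = x₂y₂ ∈ E(G₂), and let G be obtained from G₁ − e₁ and G₂ − e₂ by adding edges f₁ = x₁x₂ and f₂ = y₁y₂. Then {f₁, f₂} is an equivalent set of G: every perfect matching of G contains either both or neither of f₁, f₂. -/

import Mathlib

open SimpleGraph

variable {V : Type*}

/-- The edge cut `∇_G(U)`: edges of `G` with exactly one endpoint in `U`. -/
def edgeCut (G : SimpleGraph V) (U : Set V) : Set (Sym2 V) :=
  {e | e ∈ G.edgeSet ∧ ∃ x y, e = s(x, y) ∧ x ∈ U ∧ y ∉ U}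

/-- Switching-equivalence of edge sets in `G`: `X = Y ⊕ ∇_G(V₀)` for some `V₀`. -/
def SwEquiv (G : SimpleGraph V) (X Y : Set (Sym2 V)) : Prop :=
  ∃ U : Set V, X = symmDiff Y (edgeCut G U)

/-- A feasible edge set: two perfect matchings meeting `X` with different parities. -/
def Feasible (G : SimpleGraph V) (X : Set (Sym2 V)) : Prop :=
  ∃ M₁ M₂ : G.Subgraph, M₁.IsPerfectMatching ∧ M₂.IsPerfectMatching ∧
    (M₁.edgeSet ∩ X).ncard % 2 ≠ (M₂.edgeSet ∩ X).ncard % 2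

/-- A matching-covered graph: connected and every edge lies in a perfect matching. -/
def MatchingCovered (G : SimpleGraph V) : Prop :=
  G.Connected ∧ ∀ e ∈ G.edgeSet, ∃ M : G.Subgraph, M.IsPerfectMatching ∧ e ∈ M.edgeSet

/-- The graph `G₁ #_{e₁,e₂} G₂`: delete edges `e₁ = x₁y₁` from `G₁` and
`e₂ = x₂y₂` from `G₂`, and add the edges `f₁ = x₁x₂` and `f₂ = y₁y₂`. -/
def splice {V₁ V₂ : Type*} (G₁ : SimpleGraph V₁) (G₂ : SimpleGraph V₂)
    (x₁ y₁ : V₁) (x₂ y₂ : V₂) : SimpleGraph (V₁ ⊕ V₂) where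
  Adj a b := match a, b with
    | .inl a, .inl b => (G₁.deleteEdges {s(x₁, y₁)}).Adj a b
    | .inr a, .inr b => (G₂.deleteEdges {s(x₂, y₂)}).Adj a b
    | .inl a, .inr b => (a = x₁ ∧ b = x₂) ∨ (a = y₁ ∧ b = y₂)
    | .inr a, .inl b => (b = x₁ ∧ a = x₂) ∨ (b = y₁ ∧ a = y₂)
  symm := ⟨by
    rintro (a | a) (b | b) h
    · exact (G₁.deleteEdges {s(x₁, y₁)}).symm.symm _ _ h
    · exact h
    · exact h
    · exact (G₂.deleteEdges {s(x₂, y₂)}).symm.symm _ _ h⟩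
  loopless := ⟨by
    rintro (a | a) h
    · exact (G₁.deleteEdges {s(x₁, y₁)}).loopless.irrefl a h
    · exact (G₂.deleteEdges {s(x₂, y₂)}).loopless.irrefl a h⟩

lemma splice_aux {V₁ V₂ : Type*} [Fintype V₁] [Fintype V₂]
    {G₁ : SimpleGraph V₁} {G₂ : SimpleGraph V₂} {x₁ y₁ : V₁} {x₂ y₂ : V₂}
    (h₁ : MatchingCovered G₁) (he₁ : G₁.Adj x₁ y₁)
    (M : (splice G₁ G₂ x₁ y₁ x₂ y₂).Subgraph) (hM : M.IsPerfectMatching)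
    {z : V₁} (hB : {v : V₁ | ∃ w, M.Adj (Sum.inl v) (Sum.inr w)} = {z}) : False := by
  classical
  -- |V₁| is even: G₁ has a perfect matching
  obtain ⟨M₁, hM₁, -⟩ := h₁.2 s(x₁, y₁) he₁
  have hV₁even : Even (Fintype.card V₁) := by
    have h := hM₁.1.even_card
    rw [Subgraph.isSpanning_iff.mp hM₁.2] at h
    simpa using h
  -- build the matching on V₁ consisting of edges of M within V₁
  set B : Set V₁ := {v : V₁ | ∃ w, M.Adj (Sum.inl v) (Sum.inr w)} with hBdef
  have huniq : ∀ v : V₁ ⊕ V₂, ∃! w, M.Adj v w := fun v => hM.1 (hM.2 v)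
  have hedge_vert : ∀ {a b : V₁}, M.Adj (Sum.inl a) (Sum.inl b) → a ∈ Bᶜ := by
    intro a b hab
    rintro ⟨w, hw⟩
    exact (Sum.inl_ne_inr ((huniq (Sum.inl a)).unique hab hw))
  let N : G₁.Subgraph :=
    { verts := Bᶜ
      Adj := fun a b => M.Adj (Sum.inl a) (Sum.inl b)
      adj_sub := fun h => ((deleteEdges_adj).mp (M.adj_sub h)).1
      edge_vert := fun h => hedge_vert h
      symm := ⟨fun a b h => M.symm.symm _ _ h⟩ }
  have hNm : N.IsMatching := by
    intro v hv
    obtain ⟨w, hw, hwu⟩ := huniq (Sum.inl v)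
    obtain (w' | w') := w
    · exact ⟨w', hw, fun b hb => Sum.inl_injective (hwu _ hb)⟩
    · exact absurd ⟨w', hw⟩ hv
  have hNeven : Even N.verts.toFinset.card := hNm.even_card
  have hverts : N.verts = ({z} : Set V₁)ᶜ := by rw [show N.verts = Bᶜ from rfl, hB]
  have hNeven' : Even (({z} : Set V₁)ᶜ.ncard) := by
    rw [← hverts]
    simpa [Set.ncard_eq_toFinset_card'] using hNeven
  have hcard : (({z} : Set V₁)ᶜ).ncard = Fintype.card V₁ - 1 := by
    rw [Set.ncard_eq_toFinset_card', Set.toFinset_compl, Finset.card_compl,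
      Set.toFinset_singleton, Finset.card_singleton]
  rw [hcard] at hNeven'
  rename' hNeven' => hNeven
  have hpos : 0 < Fintype.card V₁ := Fintype.card_pos_iff.mpr ⟨z⟩
  obtain ⟨k, hk⟩ := hV₁even
  obtain ⟨m, hm⟩ := hNeven
  omega

/-- in the spliced graph, every perfect matching contains
either both or neither of the new edges `f₁ = x₁x₂` and `f₂ = y₁y₂`. -/
theorem stmt18 {V₁ V₂ : Type*} [Fintype V₁] [Fintype V₂]
    {G₁ : SimpleGraph V₁} {G₂ : SimpleGraph V₂} {x₁ y₁ : V₁} {x₂ y₂ : V₂}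
    (h₁ : MatchingCovered G₁) (h₂ : MatchingCovered G₂)
    (he₁ : G₁.Adj x₁ y₁) (he₂ : G₂.Adj x₂ y₂)
    (M : (splice G₁ G₂ x₁ y₁ x₂ y₂).Subgraph) (hM : M.IsPerfectMatching) :
    (s(Sum.inl x₁, Sum.inr x₂) ∈ M.edgeSet ∧ s(Sum.inl y₁, Sum.inr y₂) ∈ M.edgeSet) ∨
    (s(Sum.inl x₁, Sum.inr x₂) ∉ M.edgeSet ∧ s(Sum.inl y₁, Sum.inr y₂) ∉ M.edgeSet) := by
  classical
  by_cases hf₁ : s(Sum.inl x₁, Sum.inr x₂) ∈ M.edgeSet <;>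
    by_cases hf₂ : s(Sum.inl y₁, Sum.inr y₂) ∈ M.edgeSet
  · exact Or.inl ⟨hf₁, hf₂⟩
  · exfalso
    refine splice_aux h₁ he₁ M hM (z := x₁) ?_
    ext v
    simp only [Set.mem_setOf_eq, Set.mem_singleton_iff]
    constructor
    · rintro ⟨w, hw⟩
      have h' : (v = x₁ ∧ w = x₂) ∨ (v = y₁ ∧ w = y₂) := M.adj_sub hw
      rcases h' with ⟨hv, -⟩ | ⟨hv, hw'⟩
      · exact hv
      · subst hv; subst hw'; exact absurd (Subgraph.mem_edgeSet.mpr hw) hf₂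
    · rintro rfl; exact ⟨x₂, Subgraph.mem_edgeSet.mp hf₁⟩
  · exfalso
    refine splice_aux h₁ he₁ M hM (z := y₁) ?_
    ext v
    simp only [Set.mem_setOf_eq, Set.mem_singleton_iff]
    constructor
    · rintro ⟨w, hw⟩
      have h' : (v = x₁ ∧ w = x₂) ∨ (v = y₁ ∧ w = y₂) := M.adj_sub hw
      rcases h' with ⟨hv, hw'⟩ | ⟨hv, -⟩
      · subst hv; subst hw'; exact absurd (Subgraph.mem_edgeSet.mpr hw) hf₁
      · exact hv
    · rintro rfl; exact ⟨y₂, Subgraph.mem_edgeSet.mp hf₂⟩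
  · exact Or.inr ⟨hf₁, hf₂⟩
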